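/- Let K be a field and for i = 1, 2, 3 let V_i = K ⊕ E_i be K-vector spaces equipped with K-linear endomorphisms φ_i acting as the identity on the K-summand, such that φ_i has no nonzero fixed vectors on E_i for each i, and φ_1 ⊗ φ_2 has no nonzero fixed vectors on E_1 ⊗ E_2. Let Π_i : V_i → K be the projections onto the K-summands. Suppose ⟨·,·⟩ : V_1 × V_2 → V_3 is a K-bilinear pairing satisfying ⟨φ_1 x, φ_2 y⟩ = φ_3 ⟨x,y⟩ and ⟨(a,0),(b,0)⟩ = (ab, 0) for a, b ∈ K. Then Π_3(⟨x_1, x_2⟩) = Π_1(x_1) · Π_2(x_2) for all x_1 ∈ V_1, x_2 ∈ V_2. -/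
import Mathlib


open TensorProduct

private lemma key_aux {K : Type*} [Field K] {V : Type*} [AddCommGroup V] [Module K V]
    [FiniteDimensional K V] (T : V →ₗ[K] V) (hT : ∀ v, T v = v → v = 0)
    (f : V →ₗ[K] K) (hf : ∀ v, f (T v) = f v) : ∀ v, f v = 0 := by
  intro v
  have hinj : Function.Injective ((T - LinearMap.id : V →ₗ[K] V) : V → V) := by
    rw [← LinearMap.ker_eq_bot, LinearMap.ker_eq_bot']
    intro m hm
    apply hT
    simpa [sub_eq_zero, LinearMap.sub_apply] using hm
  obtain ⟨w, hw⟩ := (LinearMap.injective_iff_surjective).mp hinj v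
  have : f v = f (T w - w) := by
    rw [← hw]; simp [LinearMap.sub_apply]
  rw [this, map_sub, hf w, sub_self]

theorem stmt15 {K E₁ E₂ E₃ : Type*} [Field K]
    [AddCommGroup E₁] [Module K E₁] [AddCommGroup E₂] [Module K E₂]
    [AddCommGroup E₃] [Module K E₃]
    [FiniteDimensional K E₁] [FiniteDimensional K E₂] [FiniteDimensional K E₃]
    (ψ₁ : E₁ →ₗ[K] E₁) (ψ₂ : E₂ →ₗ[K] E₂) (ψ₃ : E₃ →ₗ[K] E₃)
    (h₁ : ∀ e : E₁, ψ₁ e = e → e = 0)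
    (h₂ : ∀ e : E₂, ψ₂ e = e → e = 0)
    (h₃ : ∀ e : E₃, ψ₃ e = e → e = 0)
    (h₁₂ : ∀ t : E₁ ⊗[K] E₂, TensorProduct.map ψ₁ ψ₂ t = t → t = 0)
    (B : (K × E₁) →ₗ[K] (K × E₂) →ₗ[K] (K × E₃))
    (hBphi : ∀ (x : K × E₁) (y : K × E₂),
      B (x.1, ψ₁ x.2) (y.1, ψ₂ y.2) = ((B x y).1, ψ₃ (B x y).2))
    (hBK : ∀ a b : K, B (a, 0) (b, 0) = (a * b, 0)) :
    ∀ (x : K × E₁) (y : K × E₂), (B x y).1 = x.1 * y.1 := by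
  have t2 : ∀ (a : K) (e : E₂), (B (a, 0) (0, e)).1 = 0 := by
    intro a e
    have := key_aux ψ₂ h₂
      ((LinearMap.fst K K E₃).comp ((B (a, 0)).comp (LinearMap.inr K K E₂)))
      (by
        intro v
        have h := congrArg Prod.fst (hBphi (a, 0) (0, v))
        simpa using h) e
    simpa using this
  have t3 : ∀ (b : K) (e : E₁), (B (0, e) (b, 0)).1 = 0 := by
    intro b e
    have := key_aux ψ₁ h₁
      ((LinearMap.fst K K E₃).comp ((B.flip (b, 0)).comp (LinearMap.inr K K E₁)))
      (by
        intro v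
        have h := congrArg Prod.fst (hBphi (0, v) (b, 0))
        simpa using h) e
    simpa using this
  have t4 : ∀ (e : E₁) (e' : E₂), (B (0, e) (0, e')).1 = 0 := by
    intro e e'
    set C : E₁ →ₗ[K] E₂ →ₗ[K] K :=
      (((B.compr₂ (LinearMap.fst K K E₃)).comp (LinearMap.inr K K E₁)).compl₂
        (LinearMap.inr K K E₂)) with hC
    have hCval : ∀ (u : E₁) (w : E₂), C u w = (B (0, u) (0, w)).1 := by
      intro u w; simp [hC, LinearMap.compr₂_apply, LinearMap.compl₂_apply]
    have hlift := key_aux (TensorProduct.map ψ₁ ψ₂) h₁₂ (TensorProduct.lift C)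
      (by
        intro t
        induction t using TensorProduct.induction_on with
        | zero => simp
        | tmul u w =>
          simp only [TensorProduct.map_tmul, TensorProduct.lift.tmul]
          rw [hCval, hCval]
          have h := congrArg Prod.fst (hBphi (0, u) (0, w))
          simpa using h
        | add s t hs ht => simp [map_add, hs, ht])
      (e ⊗ₜ e')
    rw [TensorProduct.lift.tmul, hCval] at hlift
    exact hlift
  intro x y
  obtain ⟨a, e₁⟩ := x
  obtain ⟨b, e₂⟩ := y
  have hx : ((a, e₁) : K × E₁) = (a, 0) + (0, e₁) := by simp
  have hy : ((b, e₂) : K × E₂) = (b, 0) + (0, e₂) := by simp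
  have expand : B (a, e₁) (b, e₂) =
      B (a, 0) (b, 0) + B (a, 0) (0, e₂) + B (0, e₁) (b, 0) + B (0, e₁) (0, e₂) := by
    rw [hx, hy]
    simp only [map_add, LinearMap.add_apply]
    abel
  rw [expand]
  simp [Prod.fst_add, hBK, t2, t3, t4]
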